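/- Let Z(t) = e^{-t} |A_{e^{-t}}| for t ∈ ℝ, where A_λ = {v ∈ W(I) : α_v ≥ λ}. Then Z satisfies the renewal equation Z(t) = Σ_{i∈I} α_i Z(t − log(1/α_i)) + e^{-t} · [t ≥ 0] for all t ∈ ℝ. -/

import Mathlib

noncomputable def wordWeight {I : Type*} (α : I → ℝ) (v : List I) : ℝ :=
  (v.map α).prod

section aux
variable {I : Type*} {α : I → ℝ}

lemma wordWeight_nil : wordWeight α ([] : List I) = 1 := by simp [wordWeight]

lemma wordWeight_cons (i : I) (v : List I) :
    wordWeight α (i :: v) = α i * wordWeight α v := by simp [wordWeight]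

lemma wordWeight_pos (hpos : ∀ i, 0 < α i) (v : List I) : 0 < wordWeight α v := by
  induction v with
  | nil => simp [wordWeight]
  | cons i w ih => rw [wordWeight_cons]; exact mul_pos (hpos i) ih

lemma wordWeight_le_one (hpos : ∀ i, 0 < α i) (hlt : ∀ i, α i < 1) (v : List I) :
    wordWeight α v ≤ 1 := by
  induction v with
  | nil => simp [wordWeight]
  | cons i w ih =>
    rw [wordWeight_cons]
    exact mul_le_one₀ (hlt i).le (wordWeight_pos hpos w).le ih

lemma wordWeight_le_of_mem (hpos : ∀ i, 0 < α i) (hlt : ∀ i, α i < 1)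
    {x : I} {v : List I} (hx : x ∈ v) : wordWeight α v ≤ α x := by
  induction v with
  | nil => simp at hx
  | cons i w ih =>
    rw [wordWeight_cons]
    rcases List.mem_cons.mp hx with rfl | hx
    · calc α x * wordWeight α w ≤ α x * 1 :=
          mul_le_mul_of_nonneg_left (wordWeight_le_one hpos hlt w) (hpos x).le
        _ = α x := mul_one _
    · calc α i * wordWeight α w ≤ 1 * α x :=
          mul_le_mul (hlt i).le (ih hx) (wordWeight_pos hpos w).le zero_le_one
        _ = α x := one_mul _

lemma wordWeight_le_pow (hpos : ∀ i, 0 < α i) {c : ℝ} (hc : 0 ≤ c)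
    {v : List I} (h : ∀ x ∈ v, α x ≤ c) :
    wordWeight α v ≤ c ^ v.length := by
  induction v with
  | nil => simp [wordWeight]
  | cons i w ih =>
    rw [wordWeight_cons, List.length_cons, pow_succ, mul_comm (c ^ w.length) c]
    exact mul_le_mul (h i List.mem_cons_self)
      (ih fun x hx => h x (List.mem_cons_of_mem i hx)) (wordWeight_pos hpos w).le hc

lemma alpha_finite (hsum : Summable α) {μ : ℝ} (hμ : 0 < μ) :
    {i : I | μ ≤ α i}.Finite := by
  have h1 : ∀ᶠ i in Filter.cofinite, α i < μ :=
    hsum.tendsto_cofinite_zero.eventually (gt_mem_nhds hμ)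
  exact (Filter.eventually_cofinite.mp h1).subset fun i hi => not_lt.mpr hi

lemma S_finite (hpos : ∀ i, 0 < α i) (hlt : ∀ i, α i < 1) (hsum : Summable α)
    {μ : ℝ} (hμ : 0 < μ) : {v : List I | μ ≤ wordWeight α v}.Finite := by
  classical
  have hJ : {i : I | μ ≤ α i}.Finite := alpha_finite hsum hμ
  have hsub : ∀ v ∈ {v : List I | μ ≤ wordWeight α v}, ∀ x ∈ v, x ∈ {i : I | μ ≤ α i} :=
    fun v hv x hx => le_trans hv (wordWeight_le_of_mem hpos hlt hx)
  have hJ' : Finite ↥{i : I | μ ≤ α i} := hJ.to_subtype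
  obtain ⟨N, hN⟩ : ∃ N : ℕ, ∀ v : List I, μ ≤ wordWeight α v → v.length ≤ N := by
    by_cases hne : {i : I | μ ≤ α i}.Nonempty
    · set T := hJ.toFinset with hT
      have hTne : T.Nonempty := by
        obtain ⟨i, hi⟩ := hne
        exact ⟨i, hJ.mem_toFinset.mpr hi⟩
      have hTi : (T.image α).Nonempty := hTne.image α
      set c := (T.image α).max' hTi with hcdef
      obtain ⟨j, hj, hcj⟩ := Finset.mem_image.mp ((T.image α).max'_mem hTi)
      have hc1 : c < 1 := by rw [hcdef, ← hcj]; exact hlt j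
      have hc0 : 0 ≤ c := by rw [hcdef, ← hcj]; exact (hpos j).le
      have hle : ∀ x ∈ {i : I | μ ≤ α i}, α x ≤ c :=
        fun x hx => Finset.le_max' _ _ (Finset.mem_image_of_mem α (hJ.mem_toFinset.mpr hx))
      obtain ⟨N, hcN⟩ := exists_pow_lt_of_lt_one hμ hc1
      refine ⟨N, fun v hv => ?_⟩
      by_contra hlen
      push_neg at hlen
      have h1 : wordWeight α v ≤ c ^ v.length :=
        wordWeight_le_pow hpos hc0 (fun x hx => hle x (hsub v hv x hx))
      have h2 : c ^ v.length ≤ c ^ N := pow_le_pow_of_le_one hc0 hc1.le hlen.le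
      exact absurd (le_trans hv (le_trans h1 h2)) (not_le.mpr hcN)
    · refine ⟨0, fun v hv => ?_⟩
      cases v with
      | nil => simp
      | cons i w =>
        exact absurd ⟨i, hsub _ hv i List.mem_cons_self⟩ hne
  have : {v : List I | μ ≤ wordWeight α v} ⊆
      (List.map (Subtype.val : ↥{i : I | μ ≤ α i} → I)) ''
        {l : List ↥{i : I | μ ≤ α i} | l.length ≤ N} := by
    intro v hv
    refine ⟨v.attach.map (fun x => ⟨x.1, hsub v hv x.1 x.2⟩), by simp only [Set.mem_setOf_eq, List.length_map, List.length_attach]; exact hN v hv, ?_⟩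
    simp [List.map_map, Function.comp]
  exact ((List.finite_length_le _ N).image _).subset this

lemma S_empty (hpos : ∀ i, 0 < α i) (hlt : ∀ i, α i < 1) {ν : ℝ} (hν : 1 < ν) :
    {v : List I | ν ≤ wordWeight α v} = (∅ : Set (List I)) := by
  ext v
  simp only [Set.mem_setOf_eq, Set.mem_empty_iff_false, iff_false, not_le]
  exact lt_of_le_of_lt (wordWeight_le_one hpos hlt v) hν

lemma card_eq (hpos : ∀ i, 0 < α i) (hlt : ∀ i, α i < 1) (hsum : Summable α)
    {μ : ℝ} (hμ : 0 < μ) :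
    (Nat.card {v : List I | μ ≤ wordWeight α v} : ℝ) =
      (∑' i : I, (Nat.card {v : List I | μ / α i ≤ wordWeight α v} : ℝ)) +
        (if μ ≤ 1 then 1 else 0) := by
  classical
  have hJ : {i : I | μ ≤ α i}.Finite := alpha_finite hsum hμ
  set T := hJ.toFinset with hTdef
  have hsupp : ∀ i ∉ T, (Nat.card {v : List I | μ / α i ≤ wordWeight α v} : ℝ) = 0 := by
    intro i hi
    have hi' : α i < μ := by
      by_contra h
      exact hi (hJ.mem_toFinset.mpr (not_lt.mp h))
    have : 1 < μ / α i := (one_lt_div (hpos i)).mpr hi'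
    rw [S_empty hpos hlt this]
    simp
  rw [tsum_eq_sum hsupp]
  -- now a purely finite computation
  have hF := S_finite hpos hlt hsum hμ
  have hFi : ∀ i : I, {v : List I | μ / α i ≤ wordWeight α v}.Finite :=
    fun i => S_finite hpos hlt hsum (div_pos hμ (hpos i))
  have claim : hF.toFinset =
      (T.biUnion fun i => ((hFi i).toFinset.image (i :: ·))) ∪
        (if μ ≤ 1 then {([] : List I)} else ∅) := by
    ext v
    cases v with
    | nil =>
      simp only [Set.Finite.mem_toFinset, Set.mem_setOf_eq, wordWeight_nil,
        Finset.mem_union, Finset.mem_biUnion]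
      constructor
      · intro h
        right
        simp [h]
      · rintro (⟨j, hj, hmem⟩ | h)
        · simp only [Finset.mem_image] at hmem
          obtain ⟨u, _, hu⟩ := hmem
          exact absurd hu (List.cons_ne_nil j u)
        · split_ifs at h with hc
          · exact hc
          · simp at h
    | cons i w =>
      simp only [Set.Finite.mem_toFinset, Set.mem_setOf_eq, wordWeight_cons,
        Finset.mem_union, Finset.mem_biUnion, Finset.mem_image]
      constructor
      · intro h
        left
        have hαi : μ ≤ α i := le_trans h (by
          calc α i * wordWeight α w ≤ α i * 1 :=
              mul_le_mul_of_nonneg_left (wordWeight_le_one hpos hlt w) (hpos i).le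
            _ = α i := mul_one _)
        refine ⟨i, hJ.mem_toFinset.mpr hαi, w, ?_, rfl⟩
        rw [div_le_iff₀ (hpos i), mul_comm]
        exact h
      · rintro (⟨j, hj, u, hu, huv⟩ | h)
        · obtain ⟨rfl, rfl⟩ : j = i ∧ u = w := by
            constructor <;> injection huv
          rw [div_le_iff₀ (hpos j), mul_comm] at hu
          exact hu
        · split_ifs at h <;> simp at h
    -- end ext
  have hdisj : Disjoint (T.biUnion fun i => ((hFi i).toFinset.image (i :: ·)))
      (if μ ≤ 1 then {([] : List I)} else ∅) := by
    rw [Finset.disjoint_left]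
    intro v hv hv'
    simp only [Finset.mem_biUnion, Finset.mem_image] at hv
    obtain ⟨j, _, u, _, rfl⟩ := hv
    split_ifs at hv' <;> simp at hv'
  have hpair : ∀ x ∈ T, ∀ y ∈ T, x ≠ y →
      Disjoint ((hFi x).toFinset.image (x :: ·)) ((hFi y).toFinset.image (y :: ·)) := by
    intro x _ y _ hxy
    rw [Finset.disjoint_left]
    intro v hv hv'
    simp only [Finset.mem_image] at hv hv'
    obtain ⟨u, _, rfl⟩ := hv
    obtain ⟨u', _, h⟩ := hv'
    exact hxy (by injection h.symm)
  have hnat : Nat.card {v : List I | μ ≤ wordWeight α v} =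
      (∑ i ∈ T, Nat.card {v : List I | μ / α i ≤ wordWeight α v}) +
        (if μ ≤ 1 then 1 else 0) := by
    rw [Nat.card_eq_card_finite_toFinset hF, claim,
      Finset.card_union_of_disjoint hdisj, Finset.card_biUnion hpair]
    congr 1
    · refine Finset.sum_congr rfl fun i _ => ?_
      rw [Finset.card_image_of_injective _ (List.cons_injective),
        Nat.card_eq_card_finite_toFinset (hFi i)]
    · split_ifs <;> simp
  rw [hnat]
  push_cast
  ring

end aux

theorem renewal_equation_Z {I : Type*} [Countable I] (α : I → ℝ)
    (hpos : ∀ i, 0 < α i) (hlt : ∀ i, α i < 1) (hsum : HasSum α 1) :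
    ∀ t : ℝ,
      (fun s : ℝ => Real.exp (-s) *
          (Nat.card {v : List I | Real.exp (-s) ≤ wordWeight α v} : ℝ)) t =
        (∑' i : I, α i *
          (fun s : ℝ => Real.exp (-s) *
            (Nat.card {v : List I | Real.exp (-s) ≤ wordWeight α v} : ℝ))
              (t - Real.log (α i)⁻¹)) +
          Real.exp (-t) * (if 0 ≤ t then 1 else 0) := by
  intro t
  have hsummable : Summable α := hsum.summable
  simp only []
  set μ := Real.exp (-t) with hμdef
  have hμ : 0 < μ := Real.exp_pos _
  have hexp : ∀ i : I, Real.exp (-(t - Real.log (α i)⁻¹)) = μ / α i := by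
    intro i
    rw [show -(t - Real.log (α i)⁻¹) = -t + Real.log (α i)⁻¹ by ring, Real.exp_add,
      Real.exp_log (inv_pos.mpr (hpos i)), div_eq_mul_inv]
  have hterm : ∀ i : I,
      α i * (Real.exp (-(t - Real.log (α i)⁻¹)) *
        (Nat.card {v : List I | Real.exp (-(t - Real.log (α i)⁻¹)) ≤ wordWeight α v} : ℝ)) =
      μ * (Nat.card {v : List I | μ / α i ≤ wordWeight α v} : ℝ) := by
    intro i
    rw [hexp i, ← mul_assoc, mul_comm (α i) (μ / α i), div_mul_cancel₀ _ (hpos i).ne']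
  rw [tsum_congr hterm, tsum_mul_left]
  have hind : (if 0 ≤ t then (1 : ℝ) else 0) = (if μ ≤ 1 then 1 else 0) := by
    have : μ ≤ 1 ↔ 0 ≤ t := by rw [hμdef, Real.exp_le_one_iff, neg_nonpos]
    simp [this]
  rw [hind, card_eq hpos hlt hsummable hμ]
  ring
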